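/- Let M be a metric space and let (x_n, y_n)_{n∈ℕ} be pairs of distinct points of M. The following are equivalent: (a) for every σ : ℕ → {−1, 1} there exists a 1-Lipschitz function f : M → ℝ with f(x_n) − f(y_n) = σ(n)·d(x_n, y_n) for every n ∈ ℕ; (b) for every choice of points u_k, v_k ∈ M (k ∈ ℕ) with {u_k, v_k} = {x_k, y_k} for every k, and for every finite sequence of indices i_1, …, i_m in ℕ, one has d(u_{i_1},v_{i_1}) + d(u_{i_2},v_{i_2}) + ⋯ + d(u_{i_m},v_{i_m}) ≤ d(u_{i_1},v_{i_2}) + d(u_{i_2},v_{i_3}) + ⋯ + d(u_{i_{m-1}},v_{i_m}) + d(u_{i_m},v_{i_1}). -/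

import Mathlib

open Finset

/-- Reindexing a sum over `range (m+1)` by the cyclic shift `r ↦ (r+1) % (m+1)`. -/
private lemma cycle_sum {β : Type*} [AddCommMonoid β] (m : ℕ) (g : ℕ → β) :
    ∑ r ∈ Finset.range (m + 1), g ((r + 1) % (m + 1)) = ∑ r ∈ Finset.range (m + 1), g r := by
  rw [Finset.sum_range_succ, Finset.sum_range_succ' g m]
  congr 1
  · exact Finset.sum_congr rfl fun r hr => by
      have : (r + 1) % (m + 1) = r + 1 :=
        Nat.mod_eq_of_lt (by have := Finset.mem_range.mp hr; omega)
      rw [this]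
  · rw [Nat.mod_self]

/-- The cyclic monotonicity hypothesis, applied to a reversed chain, yields the
"non-negative cycle" inequality we need. -/
private lemma key_cyclic {M : Type*} [MetricSpace M] (u v : ℕ → M)
    (hb : ∀ m : ℕ, 1 ≤ m → ∀ i : ℕ → ℕ,
      ∑ r ∈ Finset.range m, dist (u (i r)) (v (i r)) ≤
        ∑ r ∈ Finset.range m, dist (u (i r)) (v (i ((r + 1) % m))))
    (m : ℕ) (i : ℕ → ℕ) :
    ∑ r ∈ Finset.range (m + 1), dist (u (i r)) (v (i r)) ≤
      (∑ r ∈ Finset.range m, dist (v (i r)) (u (i (r + 1)))) + dist (v (i m)) (u (i 0)) := by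
  have h := hb (m + 1) (by omega) (fun r => i (m - r))
  have e1 : ∑ r ∈ Finset.range (m + 1), dist (u (i (m - r))) (v (i (m - r)))
      = ∑ r ∈ Finset.range (m + 1), dist (u (i r)) (v (i r)) := by
    have := Finset.sum_range_reflect (fun r => dist (u (i r)) (v (i r))) (m + 1)
    simpa using this
  have e2 : ∑ r ∈ Finset.range (m + 1), dist (u (i (m - r))) (v (i (m - ((r + 1) % (m + 1)))))
      = (∑ s ∈ Finset.range m, dist (u (i (s + 1))) (v (i s))) + dist (u (i 0)) (v (i m)) := by
    rw [Finset.sum_range_succ]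
    congr 1
    · have e3 : ∀ r ∈ Finset.range m,
          dist (u (i (m - r))) (v (i (m - ((r + 1) % (m + 1)))))
          = dist (u (i (m - 1 - r + 1))) (v (i (m - 1 - r))) := by
        intro r hr
        have hrm := Finset.mem_range.mp hr
        have h1 : (r + 1) % (m + 1) = r + 1 := Nat.mod_eq_of_lt (by omega)
        have h2 : m - r = m - 1 - r + 1 := by omega
        have h3 : m - (r + 1) = m - 1 - r := by omega
        rw [h1, h2, h3]
      rw [Finset.sum_congr rfl e3]
      exact Finset.sum_range_reflect (fun s => dist (u (i (s + 1))) (v (i s))) m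
    · have h1 : (m + 1) % (m + 1) = 0 := Nat.mod_self _
      rw [h1]
      simp
  rw [e1, e2] at h
  calc ∑ r ∈ Finset.range (m + 1), dist (u (i r)) (v (i r))
      ≤ (∑ s ∈ Finset.range m, dist (u (i (s + 1))) (v (i s))) + dist (u (i 0)) (v (i m)) := h
    _ = (∑ r ∈ Finset.range m, dist (v (i r)) (u (i (r + 1)))) + dist (v (i m)) (u (i 0)) := by
        rw [dist_comm (u (i 0))]
        congr 1
        exact Finset.sum_congr rfl fun r _ => dist_comm _ _

section construction

variable {M : Type*} [MetricSpace M]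

/-- Cost of a path from `p₀` through the discount edges `i 0, …, i m` ending at `p`. -/
private noncomputable def chainCost (u v : ℕ → M) (p₀ : M) (i : ℕ → ℕ) (m : ℕ) (p : M) : ℝ :=
  dist p₀ (u (i 0)) + ∑ r ∈ Finset.range m, dist (v (i r)) (u (i (r + 1)))
    + dist (v (i m)) p - ∑ r ∈ Finset.range (m + 1), dist (u (i r)) (v (i r))

private def SChain (u v : ℕ → M) (p₀ : M) (p : M) : Set ℝ :=
  insert (dist p₀ p) {c | ∃ m i, c = chainCost u v p₀ i m p}

private lemma SSet_nonempty (u v : ℕ → M) (p₀ p : M) : (SChain u v p₀ p).Nonempty :=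
  ⟨dist p₀ p, Set.mem_insert _ _⟩

private lemma SSet_lb (u v : ℕ → M) (p₀ : M)
    (hb : ∀ m : ℕ, 1 ≤ m → ∀ i : ℕ → ℕ,
      ∑ r ∈ Finset.range m, dist (u (i r)) (v (i r)) ≤
        ∑ r ∈ Finset.range m, dist (u (i r)) (v (i ((r + 1) % m))))
    (p : M) : ∀ c ∈ SChain u v p₀ p, -dist p p₀ ≤ c := by
  rintro c (rfl | ⟨m, i, rfl⟩)
  · have h1 : (0:ℝ) ≤ dist p₀ p := dist_nonneg
    have h2 : (0:ℝ) ≤ dist p p₀ := dist_nonneg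
    linarith
  · have hkey := key_cyclic u v hb m i
    have ht : dist (v (i m)) (u (i 0)) ≤ dist (v (i m)) p + dist p p₀ + dist p₀ (u (i 0)) :=
      dist_triangle4 _ _ _ _
    unfold chainCost
    linarith

private lemma SSet_bdd (u v : ℕ → M) (p₀ : M)
    (hb : ∀ m : ℕ, 1 ≤ m → ∀ i : ℕ → ℕ,
      ∑ r ∈ Finset.range m, dist (u (i r)) (v (i r)) ≤
        ∑ r ∈ Finset.range m, dist (u (i r)) (v (i ((r + 1) % m))))
    (p : M) : BddBelow (SChain u v p₀ p) :=
  ⟨-dist p p₀, fun c hc => SSet_lb u v p₀ hb p c hc⟩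

private noncomputable def ff (u v : ℕ → M) (p₀ : M) (p : M) : ℝ := sInf (SChain u v p₀ p)

private lemma ff_le (u v : ℕ → M) (p₀ : M)
    (hb : ∀ m : ℕ, 1 ≤ m → ∀ i : ℕ → ℕ,
      ∑ r ∈ Finset.range m, dist (u (i r)) (v (i r)) ≤
        ∑ r ∈ Finset.range m, dist (u (i r)) (v (i ((r + 1) % m))))
    (p q : M) : ff u v p₀ p ≤ ff u v p₀ q + dist q p := by
  have : ff u v p₀ p - dist q p ≤ ff u v p₀ q := by
    apply le_csInf (SSet_nonempty u v p₀ q)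
    rintro c (rfl | ⟨m, i, rfl⟩)
    · have hmem : dist p₀ p ∈ SChain u v p₀ p := Set.mem_insert _ _
      have h1 : ff u v p₀ p ≤ dist p₀ p := csInf_le (SSet_bdd u v p₀ hb p) hmem
      have h2 : dist p₀ p ≤ dist p₀ q + dist q p := dist_triangle _ _ _
      linarith
    · have hmem : chainCost u v p₀ i m p ∈ SChain u v p₀ p :=
        Set.mem_insert_iff.mpr (Or.inr ⟨m, i, rfl⟩)
      have h1 : ff u v p₀ p ≤ chainCost u v p₀ i m p := csInf_le (SSet_bdd u v p₀ hb p) hmem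
      have h2 : chainCost u v p₀ i m p ≤ chainCost u v p₀ i m q + dist q p := by
        unfold chainCost
        have : dist (v (i m)) p ≤ dist (v (i m)) q + dist q p := dist_triangle _ _ _
        linarith
      linarith
  linarith

private lemma ff_lipschitz (u v : ℕ → M) (p₀ : M)
    (hb : ∀ m : ℕ, 1 ≤ m → ∀ i : ℕ → ℕ,
      ∑ r ∈ Finset.range m, dist (u (i r)) (v (i r)) ≤
        ∑ r ∈ Finset.range m, dist (u (i r)) (v (i ((r + 1) % m))))
    : LipschitzWith 1 (ff u v p₀) := by
  apply LipschitzWith.of_dist_le_mul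
  intro p q
  rw [Real.dist_eq, NNReal.coe_one, one_mul, abs_le]
  constructor
  · have := ff_le u v p₀ hb q p
    rw [dist_comm p q] at *
    linarith
  · have := ff_le u v p₀ hb p q
    rw [dist_comm q p] at this
    linarith

/-- Appending the discount edge `n` to a chain ending at `u n`. -/
private lemma ff_append (u v : ℕ → M) (p₀ : M)
    (hb : ∀ m : ℕ, 1 ≤ m → ∀ i : ℕ → ℕ,
      ∑ r ∈ Finset.range m, dist (u (i r)) (v (i r)) ≤
        ∑ r ∈ Finset.range m, dist (u (i r)) (v (i ((r + 1) % m))))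
    (n : ℕ) : ff u v p₀ (u n) - ff u v p₀ (v n) = dist (u n) (v n) := by
  have hle : ff u v p₀ (u n) - ff u v p₀ (v n) ≤ dist (u n) (v n) := by
    have := ff_le u v p₀ hb (u n) (v n)
    rw [dist_comm (v n) (u n)] at this
    linarith
  have hge : ff u v p₀ (v n) + dist (u n) (v n) ≤ ff u v p₀ (u n) := by
    apply le_csInf (SSet_nonempty u v p₀ (u n))
    rintro c (rfl | ⟨m, i, rfl⟩)
    · -- the one-edge chain through `n`
      have hmem : chainCost u v p₀ (fun _ => n) 0 (v n) ∈ SChain u v p₀ (v n) :=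
        Set.mem_insert_iff.mpr (Or.inr ⟨0, fun _ => n, rfl⟩)
      have h1 : ff u v p₀ (v n) ≤ chainCost u v p₀ (fun _ => n) 0 (v n) :=
        csInf_le (SSet_bdd u v p₀ hb (v n)) hmem
      have h2 : chainCost u v p₀ (fun _ => n) 0 (v n)
          = dist p₀ (u n) - dist (u n) (v n) := by
        unfold chainCost
        simp
      linarith
    · -- append `n` to the chain `i`
      set i' : ℕ → ℕ := fun r => if r ≤ m then i r else n with hi'
      have hmem : chainCost u v p₀ i' (m + 1) (v n) ∈ SChain u v p₀ (v n) :=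
        Set.mem_insert_iff.mpr (Or.inr ⟨m + 1, i', rfl⟩)
      have h1 : ff u v p₀ (v n) ≤ chainCost u v p₀ i' (m + 1) (v n) :=
        csInf_le (SSet_bdd u v p₀ hb (v n)) hmem
      have h2 : chainCost u v p₀ i' (m + 1) (v n)
          = chainCost u v p₀ i m (u n) - dist (u n) (v n) := by
        unfold chainCost
        have e0 : i' 0 = i 0 := by simp [hi']
        have e1 : ∑ r ∈ Finset.range (m + 1), dist (v (i' r)) (u (i' (r + 1)))
            = (∑ r ∈ Finset.range m, dist (v (i r)) (u (i (r + 1)))) + dist (v (i m)) (u n) := by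
          rw [Finset.sum_range_succ]
          congr 1
          · refine Finset.sum_congr rfl fun r hr => ?_
            have hrm := Finset.mem_range.mp hr
            have a1 : i' r = i r := by simp [hi']; omega
            have a2 : i' (r + 1) = i (r + 1) := by
              simp only [hi']
              rw [if_pos (by omega)]
            rw [a1, a2]
          · have a1 : i' m = i m := by simp [hi']
            have a2 : i' (m + 1) = n := by simp [hi']
            rw [a1, a2]
        have e2 : i' (m + 1) = n := by simp [hi']
        have e3 : ∑ r ∈ Finset.range (m + 1 + 1), dist (u (i' r)) (v (i' r))
            = (∑ r ∈ Finset.range (m + 1), dist (u (i r)) (v (i r))) + dist (u n) (v n) := by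
          rw [Finset.sum_range_succ]
          congr 1
          · refine Finset.sum_congr rfl fun r hr => ?_
            have hrm := Finset.mem_range.mp hr
            have a1 : i' r = i r := by simp only [hi']; rw [if_pos (by omega)]
            rw [a1]
          · rw [e2]
        rw [e0, e1, e2, e3]
        simp
        ring
      linarith
  linarith [hle, hge]

end construction

/-- Corollary 2.5 (ii)⇔(iii) of the paper: every sequence of signs can be simultaneously
normed by a single 1-Lipschitz real function iff every reordering of the pairs is
cyclically monotone. -/
theorem stmt_6 {M : Type*} [MetricSpace M] (x y : ℕ → M) (hxy : ∀ n : ℕ, x n ≠ y n) :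
    (∀ σ : ℕ → ℝ, (∀ n, σ n = 1 ∨ σ n = -1) →
      ∃ f : M → ℝ, LipschitzWith 1 f ∧
        ∀ n : ℕ, f (x n) - f (y n) = σ n * dist (x n) (y n)) ↔
    (∀ u v : ℕ → M,
      (∀ k : ℕ, (u k = x k ∧ v k = y k) ∨ (u k = y k ∧ v k = x k)) →
      ∀ m : ℕ, 1 ≤ m → ∀ i : ℕ → ℕ,
        ∑ r ∈ Finset.range m, dist (u (i r)) (v (i r)) ≤
          ∑ r ∈ Finset.range m, dist (u (i r)) (v (i ((r + 1) % m)))) := by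
  constructor
  · -- (a) → (b)
    intro ha u v huv m hm i
    classical
    set σ : ℕ → ℝ := fun n => if u n = x n ∧ v n = y n then 1 else -1 with hσdef
    obtain ⟨f, hf, hfn⟩ := ha σ (fun n => by
      by_cases h : u n = x n ∧ v n = y n <;> simp [hσdef, h])
    have hfu : ∀ n, f (u n) - f (v n) = dist (u n) (v n) := by
      intro n
      rcases huv n with ⟨h1, h2⟩ | ⟨h1, h2⟩
      · have hs : σ n = 1 := by simp [hσdef, h1, h2]
        have := hfn n
        rw [hs, one_mul] at this
        rw [h1, h2, this]
      · have hs : σ n = -1 := by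
          simp only [hσdef]
          rw [if_neg]
          rintro ⟨a1, a2⟩
          exact hxy n (h1 ▸ a1.symm ▸ rfl) |>.elim
        have := hfn n
        rw [hs] at this
        rw [h1, h2, dist_comm (y n) (x n)]
        linarith
    obtain ⟨m', rfl⟩ : ∃ m', m = m' + 1 := ⟨m - 1, by omega⟩
    have hcyc : ∑ r ∈ Finset.range (m' + 1), f (v (i ((r + 1) % (m' + 1))))
        = ∑ r ∈ Finset.range (m' + 1), f (v (i r)) :=
      cycle_sum m' (fun r => f (v (i r)))
    have hlip : ∀ r, f (u (i r)) - f (v (i ((r + 1) % (m' + 1))))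
        ≤ dist (u (i r)) (v (i ((r + 1) % (m' + 1)))) := by
      intro r
      have := hf.dist_le_mul (u (i r)) (v (i ((r + 1) % (m' + 1))))
      rw [Real.dist_eq, NNReal.coe_one, one_mul] at this
      have := abs_le.mp this
      linarith [this.2]
    calc ∑ r ∈ Finset.range (m' + 1), dist (u (i r)) (v (i r))
        = ∑ r ∈ Finset.range (m' + 1), (f (u (i r)) - f (v (i r))) :=
          Finset.sum_congr rfl fun r _ => (hfu (i r)).symm
      _ = ∑ r ∈ Finset.range (m' + 1), f (u (i r))
            - ∑ r ∈ Finset.range (m' + 1), f (v (i r)) := Finset.sum_sub_distrib _ _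
      _ = ∑ r ∈ Finset.range (m' + 1), f (u (i r))
            - ∑ r ∈ Finset.range (m' + 1), f (v (i ((r + 1) % (m' + 1)))) := by rw [hcyc]
      _ = ∑ r ∈ Finset.range (m' + 1),
            (f (u (i r)) - f (v (i ((r + 1) % (m' + 1))))) := (Finset.sum_sub_distrib _ _).symm
      _ ≤ ∑ r ∈ Finset.range (m' + 1), dist (u (i r)) (v (i ((r + 1) % (m' + 1)))) :=
          Finset.sum_le_sum fun r _ => hlip r
  · -- (b) → (a)
    intro hb σ hσ
    classical
    set u : ℕ → M := fun n => if σ n = 1 then x n else y n with hu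
    set v : ℕ → M := fun n => if σ n = 1 then y n else x n with hv
    have huv : ∀ k, (u k = x k ∧ v k = y k) ∨ (u k = y k ∧ v k = x k) := by
      intro k
      by_cases h : σ k = 1
      · exact Or.inl ⟨by simp [hu, h], by simp [hv, h]⟩
      · exact Or.inr ⟨by simp [hu, h], by simp [hv, h]⟩
    have hb' := hb u v huv
    refine ⟨ff u v (x 0), ff_lipschitz u v (x 0) hb', fun n => ?_⟩
    have hmain := ff_append u v (x 0) hb' n
    rcases hσ n with hs | hs
    · have h1 : u n = x n := by simp [hu, hs]
      have h2 : v n = y n := by simp [hv, hs]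
      rw [h1, h2] at hmain
      rw [hmain, hs, one_mul]
    · have hne : ¬ (σ n = 1) := by rw [hs]; norm_num
      have h1 : u n = y n := by simp [hu, hne]
      have h2 : v n = x n := by simp [hv, hne]
      rw [h1, h2] at hmain
      rw [hs]
      rw [dist_comm (y n) (x n)] at hmain
      linarith
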